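/- arXiv:2202.03982 — 3 statements merged into one kernel-verified Lean document; each statement's English description precedes it below -/
import Mathlib

section
/- Let q ≥ 2 and d ≥ 3 be integers with (q,d) ≠ (2,6). Then there exists a prime ℓ such that the multiplicative order of q modulo ℓ equals d. (Zsygmondy/Birkhoff–Vandiver theorem.) -/
open Polynomial Finset

private lemma bv_two_pow (p : ℕ) (hp : 2 ≤ p) : p + 1 < 2 ^ p := by
  induction p with
  | zero => omega
  | succ n ih =>
    rcases Nat.lt_or_ge n 2 with h | h
    · have hn : n = 1 := by omega
      subst hn; norm_num
    · have h1 := ih h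
      have : 2 ^ (n + 1) = 2 ^ n * 2 := by rw [pow_succ]
      omega

private lemma bv_key {p q : ℕ} (hp : 3 ≤ p) (hq : 2 ≤ q) (hne : ¬(p = 3 ∧ q = 2)) :
    p * (q + 1) < q ^ p := by
  induction p with
  | zero => omega
  | succ n ih =>
    rcases Nat.lt_or_ge n 3 with h | h
    · have hn : n = 2 := by omega
      subst hn
      have hq3 : 3 ≤ q := by
        rcases Nat.lt_or_ge q 3 with h' | h'
        · exfalso; exact hne ⟨rfl, by omega⟩
        · exact h'
      have h3 : q ^ (2+1) = q * q * q := by ring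
      nlinarith
    · have hq1 : q + 1 < q ^ n := by
        have : q ^ 3 ≤ q ^ n := Nat.pow_le_pow_right (by omega) h
        have : q * q * q ≤ q ^ n := by rw [show q*q*q = q^3 by ring] at *; omega
        nlinarith
      by_cases hc : n = 3 ∧ q = 2
      · obtain ⟨rfl, rfl⟩ := hc; norm_num
      · have h2 := ih h hc
        have h3 : q ^ (n + 1) = q ^ n * q := by rw [pow_succ]
        nlinarith

private lemma bv_isRoot {r n q : ℕ} [Fact r.Prime] (h : (r : ℤ) ∣ (cyclotomic n ℤ).eval (q : ℤ)) :
    (cyclotomic n (ZMod r)).IsRoot ((q : ℕ) : ZMod r) := by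
  have hmap : (cyclotomic n ℤ).map (Int.castRingHom (ZMod r)) = cyclotomic n (ZMod r) :=
    map_cyclotomic_int n (ZMod r)
  rw [IsRoot.def, ← hmap, eval_map, Polynomial.eval₂_at_natCast]
  simp only [Int.coe_castRingHom]
  rw [show (((cyclotomic n ℤ).eval ((q : ℕ) : ℤ) : ℤ) : ZMod r) = 0 ↔ (r:ℤ) ∣ _ from
    ZMod.intCast_zmod_eq_zero_iff_dvd _ r]
  exact_mod_cast h

private lemma bv_orderOf_eq {r n q : ℕ} [hr : Fact r.Prime] (hrn : ¬ r ∣ n)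
    (h : (r : ℤ) ∣ (cyclotomic n ℤ).eval (q : ℤ)) : orderOf ((q : ℕ) : ZMod r) = n := by
  haveI : NeZero ((n : ZMod r)) :=
    ⟨fun hh => hrn ((ZMod.natCast_eq_zero_iff n r).mp hh)⟩
  exact ((isRoot_cyclotomic_iff).mp (bv_isRoot h)).eq_orderOf.symm

private lemma bv_orderOf_eq_ordCompl {r n q : ℕ} [hr : Fact r.Prime] (hn : n ≠ 0)
    (h : (r : ℤ) ∣ (cyclotomic n ℤ).eval (q : ℤ)) :
    orderOf ((q : ℕ) : ZMod r) = ordCompl[r] n := by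
  set m : ℕ := ordCompl[r] n with hm
  have hnd : ¬ r ∣ m := Nat.not_dvd_ordCompl hr.out hn
  haveI : NeZero ((m : ZMod r)) :=
    ⟨fun hh => hnd ((ZMod.natCast_eq_zero_iff m r).mp hh)⟩
  have hroot : (cyclotomic (r ^ n.factorization r * m) (ZMod r)).IsRoot
      ((q : ℕ) : ZMod r) := by
    rw [hm, Nat.ordProj_mul_ordCompl_eq_self]
    exact bv_isRoot h
  exact ((isRoot_cyclotomic_prime_pow_mul_iff_of_charP).mp hroot).eq_orderOf.symm

private lemma bv_prod_eval (n : ℕ) (hn : 0 < n) (x : ℤ) :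
    ∏ e ∈ n.divisors, (cyclotomic e ℤ).eval x = x ^ n - 1 := by
  have h := prod_cyclotomic_eq_X_pow_sub_one hn ℤ
  have := congrArg (eval x) h
  simpa [eval_prod] using this

private lemma bv_dvd_geom {d c t q : ℕ} (hq : 2 ≤ q) (hc : 0 < c) (hct : c * t = d)
    (hlt : c < d) :
    (cyclotomic d ℤ).eval (q : ℤ) ∣ ∑ i ∈ range t, ((q : ℤ) ^ c) ^ i := by
  have hd0 : 0 < d := lt_of_le_of_lt (Nat.zero_le c) hlt
  have hq1 : (1 : ℤ) < (q : ℤ) := by exact_mod_cast hq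
  have hcd : c ∣ d := ⟨t, hct.symm⟩
  have hsub : c.divisors ⊆ d.divisors := Nat.divisors_subset_of_dvd hd0.ne' hcd
  have h1 := bv_prod_eval d hd0 (q : ℤ)
  have h2 := bv_prod_eval c hc (q : ℤ)
  have hS : (∑ i ∈ range t, ((q : ℤ) ^ c) ^ i) * ((q : ℤ) ^ c - 1) = (q : ℤ) ^ d - 1 := by
    rw [geom_sum_mul, ← pow_mul, hct]
  have hne : (q : ℤ) ^ c - 1 ≠ 0 := by
    have h3 : (1 : ℤ) < (q : ℤ) ^ c := one_lt_pow₀ hq1 hc.ne'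
    omega
  have hprod : (∏ e ∈ d.divisors \ c.divisors, (cyclotomic e ℤ).eval (q : ℤ)) *
      ((q : ℤ) ^ c - 1) = (q : ℤ) ^ d - 1 := by
    rw [← h2, Finset.prod_sdiff hsub, h1]
  have heq : ∏ e ∈ d.divisors \ c.divisors, (cyclotomic e ℤ).eval (q : ℤ) =
      ∑ i ∈ range t, ((q : ℤ) ^ c) ^ i := mul_right_cancel₀ hne (by rw [hprod, hS])
  rw [← heq]
  refine Finset.dvd_prod_of_mem _ (Finset.mem_sdiff.mpr ⟨Nat.mem_divisors_self d hd0.ne', ?_⟩)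
  intro hmem
  have hdc : d ∣ c := (Nat.mem_divisors.mp hmem).1
  have := Nat.le_of_dvd hc hdc
  omega

private lemma bv_not_sq_dvd {p Q : ℕ} (hp : p.Prime) (hodd : p ≠ 2) (hQd : p ∣ Q - 1)
    (hQ1 : 1 ≤ Q) : ¬ p ^ 2 ∣ ∑ i ∈ range p, Q ^ i := by
  have hp2 := hp.two_le
  obtain ⟨s, hs⟩ := hQd
  have hQt : Q = 1 + p * s := by omega
  intro hdvd
  have h0 : ((∑ i ∈ range p, Q ^ i : ℕ) : ZMod (p ^ 2)) = 0 :=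
    (ZMod.natCast_eq_zero_iff _ _).mpr hdvd
  set u : ZMod (p ^ 2) := ((p * s : ℕ) : ZMod (p ^ 2)) with hu
  have hpp : ((p : ℕ) : ZMod (p ^ 2)) * ((p : ℕ) : ZMod (p ^ 2)) = 0 := by
    rw [show ((p : ℕ) : ZMod (p ^ 2)) * ((p : ℕ) : ZMod (p ^ 2)) = ((p ^ 2 : ℕ) : ZMod (p ^ 2))
      by push_cast; ring, ZMod.natCast_self]
  have hpu : ((p : ℕ) : ZMod (p ^ 2)) * u = 0 := by
    rw [hu]; push_cast; push_cast at hpp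
    calc (p : ZMod (p ^ 2)) * ((p : ZMod (p ^ 2)) * (s : ZMod (p ^ 2)))
        = ((p : ZMod (p ^ 2)) * (p : ZMod (p ^ 2))) * (s : ZMod (p ^ 2)) := by ring
      _ = 0 := by rw [hpp, zero_mul]
  have huu : u * u = 0 := by
    rw [hu]; push_cast; push_cast at hpp
    calc (p : ZMod (p ^ 2)) * (s : ZMod (p ^ 2)) * ((p : ZMod (p ^ 2)) * (s : ZMod (p ^ 2)))
        = ((p : ZMod (p ^ 2)) * (p : ZMod (p ^ 2))) * ((s : ZMod (p ^ 2)) * (s : ZMod (p ^ 2))) := by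
          ring
      _ = 0 := by rw [hpp, zero_mul]
  have hpow : ∀ i : ℕ, ((Q : ℕ) : ZMod (p ^ 2)) ^ i = 1 + (i : ZMod (p ^ 2)) * u := by
    intro i
    induction i with
    | zero => simp
    | succ n ih =>
      have hQu : ((Q : ℕ) : ZMod (p ^ 2)) = 1 + u := by rw [hQt, hu]; push_cast; ring
      calc ((Q : ℕ) : ZMod (p ^ 2)) ^ (n + 1)
          = ((Q : ℕ) : ZMod (p ^ 2)) ^ n * ((Q : ℕ) : ZMod (p ^ 2)) := pow_succ _ _
        _ = (1 + (n : ZMod (p ^ 2)) * u) * (1 + u) := by rw [ih, hQu]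
        _ = 1 + ((n : ZMod (p ^ 2)) + 1) * u + (n : ZMod (p ^ 2)) * (u * u) := by ring
        _ = 1 + ((n + 1 : ℕ) : ZMod (p ^ 2)) * u := by rw [huu]; push_cast; ring
  have hgauss : (∑ i ∈ range p, i) = p * ((p - 1) / 2) := by
    have h2 : (∑ i ∈ range p, i) * 2 = p * (p - 1) := Finset.sum_range_id_mul_two p
    obtain ⟨c, hc⟩ := hp.odd_of_ne_two hodd
    have hw2 : (p - 1) / 2 = c := by omega
    have h3 : (∑ i ∈ range p, i) * 2 = (p * c) * 2 := by
      rw [h2, show p - 1 = 2 * c by omega]; ring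
    rw [hw2]
    exact Nat.eq_of_mul_eq_mul_right (by norm_num) h3
  have hsum : ((∑ i ∈ range p, Q ^ i : ℕ) : ZMod (p ^ 2)) = ((p : ℕ) : ZMod (p ^ 2)) := by
    push_cast
    calc (∑ i ∈ range p, (Q : ZMod (p ^ 2)) ^ i)
        = ∑ i ∈ range p, (1 + (i : ZMod (p ^ 2)) * u) := by
          refine Finset.sum_congr rfl fun i _ => ?_
          have := hpow i; push_cast at this; exact this
      _ = (p : ZMod (p ^ 2)) + (((∑ i ∈ range p, i : ℕ) : ZMod (p ^ 2))) * u := by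
          rw [Finset.sum_add_distrib, Finset.sum_const, Finset.card_range, ← Finset.sum_mul]
          push_cast
          ring
      _ = (p : ZMod (p ^ 2)) := by
          rw [hgauss]
          push_cast
          rw [show (p : ZMod (p ^ 2)) * (((p - 1) / 2 : ℕ) : ZMod (p ^ 2)) * u
            = (((p - 1) / 2 : ℕ) : ZMod (p ^ 2)) * ((p : ZMod (p ^ 2)) * u) by ring]
          push_cast at hpu
          rw [hpu, mul_zero, add_zero]
  rw [hsum] at h0
  have : p ^ 2 ∣ p := (ZMod.natCast_eq_zero_iff _ _).mp h0
  have := Nat.le_of_dvd (by omega) this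
  nlinarith

private lemma bv_not_four_dvd {x : ℕ} (hodd : ¬ 2 ∣ x) : ¬ 4 ∣ 1 + x ^ 2 := by
  obtain ⟨a, ha⟩ : ∃ a, x = 2 * a + 1 := ⟨x / 2, by omega⟩
  subst ha
  have : (2 * a + 1) ^ 2 = 4 * (a * a + a) + 1 := by ring
  omega

private lemma bv_upper {m q : ℕ} (hm : 3 ≤ m) (hq : 2 ≤ q) :
    ((cyclotomic m ℤ).eval (q : ℤ)).natAbs < (q + 1) ^ m.totient := by
  have hq1 : (1 : ℝ) < (q : ℝ) := by exact_mod_cast (by omega : 1 < q)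
  have hR := cyclotomic_eval_lt_add_one_pow_totient hm hq1
  have hcast : (cyclotomic m ℝ).eval ((q : ℕ) : ℝ) = (((cyclotomic m ℤ).eval ((q : ℕ) : ℤ) : ℤ) : ℝ) := by
    rw [← map_cyclotomic_int m ℝ, eval_map, Polynomial.eval₂_at_natCast]
    simp
  have hpos : 0 < (cyclotomic m ℤ).eval (q : ℤ) :=
    cyclotomic_pos' m (by exact_mod_cast (by omega : 1 < q))
  have habs : (((cyclotomic m ℤ).eval (q : ℤ)).natAbs : ℝ) = (cyclotomic m ℝ).eval ((q : ℕ) : ℝ) := by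
    rw [hcast, Nat.cast_natAbs, abs_of_pos (by exact_mod_cast hpos)]
  rw [← Nat.cast_lt (α := ℝ), habs]
  calc (cyclotomic m ℝ).eval ((q : ℕ) : ℝ) < ((q : ℝ) + 1) ^ m.totient := hR
    _ = (((q + 1 : ℕ) : ℝ)) ^ m.totient := by push_cast; ring
    _ = (((q + 1) ^ m.totient : ℕ) : ℝ) := by push_cast; ring

/-- **Birkhoff–Vandiver / Zsygmondy**: for `q ≥ 2` and `d ≥ 3` with `(q,d) ≠ (2,6)`,
there is a prime `ℓ` such that the multiplicative order of `q` modulo `ℓ` equals `d`. -/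
theorem order_exists_of_ne_two_six (q d : ℕ) (hq : 2 ≤ q) (hd : 3 ≤ d)
    (h : ¬(q = 2 ∧ d = 6)) :
    ∃ ℓ : ℕ, ℓ.Prime ∧ orderOf (q : ZMod ℓ) = d := by
  have hq1 : (1 : ℤ) < (q : ℤ) := by exact_mod_cast hq
  set Φ : ℤ := (cyclotomic d ℤ).eval (q : ℤ) with hΦdef
  have hΦpos : 0 < Φ := cyclotomic_pos' d hq1
  have hΦgt : (q - 1) ^ d.totient < Φ.natAbs :=
    sub_one_pow_totient_lt_natAbs_cyclotomic_eval (by omega) (by omega)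
  have hΦ2 : 2 ≤ Φ.natAbs := by
    have h1 : 1 ≤ (q - 1) ^ d.totient := Nat.one_le_pow _ _ (by omega)
    omega
  by_cases hgood : ∃ ℓ, ℓ.Prime ∧ ℓ ∣ Φ.natAbs ∧ ¬ ℓ ∣ d
  · obtain ⟨ℓ, hℓp, hℓΦ, hℓd⟩ := hgood
    haveI := Fact.mk hℓp
    exact ⟨ℓ, hℓp, bv_orderOf_eq hℓd (Int.dvd_natAbs.mp (Int.natCast_dvd_natCast.mpr hℓΦ))⟩
  · exfalso
    push_neg at hgood
    obtain ⟨p, hp, hpΦ⟩ := Nat.exists_prime_and_dvd (by omega : Φ.natAbs ≠ 1)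
    haveI := Fact.mk hp
    have hpd : p ∣ d := hgood p hp hpΦ
    have hpz : (p : ℤ) ∣ Φ := Int.dvd_natAbs.mp (Int.natCast_dvd_natCast.mpr hpΦ)
    set m : ℕ := ordCompl[p] d with hm
    have hmord : orderOf ((q : ℕ) : ZMod p) = m := bv_orderOf_eq_ordCompl (by omega) hpz
    set j : ℕ := d.factorization p with hj
    have hj1 : 1 ≤ j := hp.factorization_pos_of_dvd (by omega) hpd
    have hd_eq : p ^ j * m = d := Nat.ordProj_mul_ordCompl_eq_self d p
    have hpm : ¬ p ∣ m := Nat.not_dvd_ordCompl hp (by omega)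
    have hm1 : 1 ≤ m := Nat.ordCompl_pos p (by omega : d ≠ 0)
    have hp2 := hp.two_le
    have hq0 : ((q : ℕ) : ZMod p) ≠ 0 := by
      intro h0
      have hpo := pow_orderOf_eq_one ((q : ℕ) : ZMod p)
      rw [hmord, h0, zero_pow (by omega : m ≠ 0)] at hpo
      exact zero_ne_one hpo
    have hmp1 : m ∣ p - 1 := by
      rw [← hmord]
      exact orderOf_dvd_of_pow_eq_one (ZMod.pow_card_sub_one_eq_one hq0)
    have huniq : ∀ {r : ℕ}, r.Prime → r ∣ Φ.natAbs → r = p := by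
      intro r hr hrΦ
      by_contra hne
      haveI := Fact.mk hr
      have hrd : r ∣ d := hgood r hr hrΦ
      have hrz : (r : ℤ) ∣ Φ := Int.dvd_natAbs.mp (Int.natCast_dvd_natCast.mpr hrΦ)
      have hr_ord : orderOf ((q : ℕ) : ZMod r) = ordCompl[r] d :=
        bv_orderOf_eq_ordCompl (by omega) hrz
      have hrm : r ∣ m := by
        have h1 : r ∣ p ^ j * m := hd_eq ▸ hrd
        exact (Nat.Coprime.pow_right _ ((Nat.coprime_primes hr hp).mpr hne)).dvd_of_dvd_mul_left h1
      have hpm' : p ∣ ordCompl[r] d := by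
        have h1 : p ∣ r ^ d.factorization r * ordCompl[r] d := by
          rw [Nat.ordProj_mul_ordCompl_eq_self]; exact hpd
        exact (Nat.Coprime.pow_right _
          ((Nat.coprime_primes hp hr).mpr (Ne.symm hne))).dvd_of_dvd_mul_left h1
      have hq0r : ((q : ℕ) : ZMod r) ≠ 0 := by
        intro h0
        have hpo := pow_orderOf_eq_one ((q : ℕ) : ZMod r)
        have hpos0 : 0 < ordCompl[r] d := Nat.ordCompl_pos r (by omega : d ≠ 0)
        rw [hr_ord, h0, zero_pow (by omega : ordCompl[r] d ≠ 0)] at hpo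
        exact zero_ne_one hpo
      have hmr : ordCompl[r] d ∣ r - 1 := by
        rw [← hr_ord]
        exact orderOf_dvd_of_pow_eq_one (ZMod.pow_card_sub_one_eq_one hq0r)
      have hr2 := hr.two_le
      have h1 : r ≤ p - 1 :=
        le_trans (Nat.le_of_dvd (by omega) hrm) (Nat.le_of_dvd (by omega) hmp1)
      have h2 : p ≤ r - 1 :=
        le_trans (Nat.le_of_dvd (Nat.ordCompl_pos r (by omega : d ≠ 0)) hpm')
          (Nat.le_of_dvd (by omega) hmr)
      omega
    have hΦeq : Φ.natAbs = p ^ Φ.natAbs.primeFactorsList.length :=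
      Nat.eq_prime_pow_of_unique_prime_dvd (by omega) huniq
    set k : ℕ := Φ.natAbs.primeFactorsList.length with hk
    have hk1 : 1 ≤ k := by
      by_contra hh
      have hzz : k = 0 := by omega
      rw [hzz, pow_zero] at hΦeq
      omega
    set c : ℕ := p ^ (j - 1) * m with hc
    have hc1 : 1 ≤ c := by
      have h1 : 0 < p ^ (j - 1) := Nat.pow_pos (by omega)
      have := Nat.mul_pos h1 (show 0 < m by omega)
      omega
    have hcd : p * c = d := by
      rw [hc, ← hd_eq, ← mul_assoc]
      congr 1
      rw [← pow_succ']
      congr 1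
      omega
    have hcltd : c < d := by
      have h1 : 2 * c ≤ p * c := Nat.mul_le_mul_right c hp2
      omega
    have hΦS : Φ ∣ ∑ i ∈ range p, ((q : ℤ) ^ c) ^ i :=
      bv_dvd_geom hq hc1 (by rw [mul_comm]; exact hcd) hcltd
    set Sn : ℕ := ∑ i ∈ range p, (q ^ c) ^ i with hSn
    have hScast : ((Sn : ℕ) : ℤ) = ∑ i ∈ range p, ((q : ℤ) ^ c) ^ i := by
      rw [hSn]; push_cast; rfl
    have hΦSn : Φ.natAbs ∣ Sn := by
      have h1 := Int.natAbs_dvd_natAbs.mpr (hScast ▸ hΦS)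
      rwa [Int.natAbs_natCast] at h1
    have hmc : m ∣ c := ⟨p ^ (j - 1), by rw [hc, mul_comm]⟩
    have hq1c : 1 ≤ q ^ c := Nat.one_le_pow _ _ (by omega)
    have hqc1 : p ∣ q ^ c - 1 := by
      have hpow1 : ((q : ℕ) : ZMod p) ^ c = 1 := by
        rw [← orderOf_dvd_iff_pow_eq_one, hmord]; exact hmc
      have hcast : (((q ^ c - 1 : ℕ)) : ZMod p) = 0 := by
        rw [Nat.cast_sub hq1c, Nat.cast_pow, hpow1, Nat.cast_one, sub_self]
      exact (ZMod.natCast_eq_zero_iff _ _).mp hcast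
    have hknot : ¬ p ^ 2 ∣ Sn := by
      rcases eq_or_ne p 2 with hp2' | hpne2
      · subst hp2'
        have hmone : m = 1 := Nat.dvd_one.mp (by simpa using hmp1)
        have hj2 : 2 ≤ j := by
          by_contra hh
          have hjj : j = 1 := by omega
          rw [hjj, hmone, pow_one, mul_one] at hd_eq
          omega
        have he : c = (2 ^ (j - 2)) * 2 := by
          rw [hc, hmone, mul_one, ← pow_succ]
          congr 1
          omega
        have hSn2 : Sn = 1 + (q ^ (2 ^ (j - 2))) ^ 2 := by
          rw [hSn, Finset.sum_range_succ, Finset.sum_range_one, pow_zero, pow_one, he, pow_mul]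
        have hqodd : ¬ 2 ∣ q := by
          intro hdq
          exact hq0 ((ZMod.natCast_eq_zero_iff q 2).mpr hdq)
        have hqe : ¬ 2 ∣ q ^ (2 ^ (j - 2)) := fun hh => hqodd (Nat.Prime.dvd_of_dvd_pow (by norm_num) hh)
        rw [hSn2]
        have := bv_not_four_dvd hqe
        simpa [show (2 : ℕ) ^ 2 = 4 from rfl] using this
      · exact bv_not_sq_dvd hp hpne2 hqc1 hq1c
    have hkeq1 : k = 1 := by
      by_contra hh
      have hk2 : 2 ≤ k := by omega
      have hdd : p ^ 2 ∣ Φ.natAbs := by rw [hΦeq]; exact pow_dvd_pow p hk2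
      exact hknot (hdd.trans hΦSn)
    have hΦp : Φ.natAbs = p := by rw [hΦeq, hkeq1, pow_one]
    have hΦval : Φ = (p : ℤ) := by
      have hna := Int.natAbs_of_nonneg hΦpos.le
      rw [← hna, hΦp]
    have hjeq1 : j = 1 := by
      by_contra hh
      have hj2 : 2 ≤ j := by omega
      have hpc : p ∣ c := by
        rw [hc]
        exact Dvd.dvd.mul_right (dvd_pow_self p (by omega : j - 1 ≠ 0)) m
      have hcyc : cyclotomic d ℤ = expand ℤ p (cyclotomic c ℤ) := by
        rw [show d = c * p by rw [← hcd]; ring]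
        exact (cyclotomic_expand_eq_cyclotomic hp hpc ℤ).symm
      have heval : Φ = (cyclotomic c ℤ).eval ((q : ℤ) ^ p) := by
        rw [hΦdef, hcyc, expand_eval]
      have hc2 : 1 < c := by
        have h1 : p ≤ p ^ (j - 1) := Nat.le_self_pow (by omega) p
        have h2 : p ^ (j - 1) * 1 ≤ p ^ (j - 1) * m := Nat.mul_le_mul_left _ hm1
        omega
      have hlow : (q ^ p - 1) ^ c.totient < ((cyclotomic c ℤ).eval ((q ^ p : ℕ) : ℤ)).natAbs := by
        refine sub_one_pow_totient_lt_natAbs_cyclotomic_eval hc2 ?_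
        have : 2 ^ p ≤ q ^ p := Nat.pow_le_pow_left hq p
        have : 2 ≤ 2 ^ p := Nat.le_self_pow (by omega) 2
        omega
      have hcast2 : ((q ^ p : ℕ) : ℤ) = (q : ℤ) ^ p := by push_cast; ring
      rw [hcast2, ← heval, hΦp] at hlow
      have h2p : p + 1 < 2 ^ p := bv_two_pow p hp2
      have hqp2 : 2 ^ p ≤ q ^ p := Nat.pow_le_pow_left hq p
      have hle : q ^ p - 1 ≤ (q ^ p - 1) ^ c.totient :=
        Nat.le_self_pow (Nat.totient_pos.mpr (by omega)).ne' _
      omega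
    have hdm : p * m = d := by rw [← hd_eq, hjeq1, pow_one]
    rcases eq_or_ne m 1 with hm1' | hm2
    · have hdp : d = p := by rw [← hdm, hm1', mul_one]
      have hΦsum : Φ = ∑ i ∈ range p, (q : ℤ) ^ i := by
        rw [hΦdef, hdp, cyclotomic_prime]
        simp [eval_finset_sum]
      have hgeo : ∑ i ∈ range p, (2 : ℤ) ^ i = 2 ^ p - 1 := by
        have hgm := geom_sum_mul (2 : ℤ) p
        simpa using hgm
      have hge : (2 : ℤ) ^ p - 1 ≤ Φ := by
        rw [hΦsum, ← hgeo]
        exact Finset.sum_le_sum fun i _ => pow_le_pow_left₀ (by norm_num) (by exact_mod_cast hq) i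
      have h2p : p + 1 < 2 ^ p := bv_two_pow p hp2
      have h2pz : (p : ℤ) + 1 < (2 : ℤ) ^ p := by exact_mod_cast h2p
      rw [hΦval] at hge
      linarith
    · have hm2' : 2 ≤ m := by omega
      have hp3 : 3 ≤ p := by
        have := Nat.le_of_dvd (by omega) hmp1
        omega
      have hid : (cyclotomic m ℤ).eval ((q : ℤ) ^ p) = Φ * (cyclotomic m ℤ).eval (q : ℤ) := by
        have hex := cyclotomic_expand_eq_cyclotomic_mul hp hpm ℤ
        have h2 := congrArg (eval (q : ℤ)) hex
        rw [expand_eval, eval_mul] at h2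
        rw [h2, hΦdef]
        rw [show m * p = d by rw [← hdm]; ring]
      rcases eq_or_ne m 2 with hm2'' | hm3
      · rw [hm2''] at hid
        have he1 : (cyclotomic 2 ℤ).eval ((q : ℤ) ^ p) = (q : ℤ) ^ p + 1 := by
          rw [cyclotomic_two]; simp
        have he2 : (cyclotomic 2 ℤ).eval ((q : ℤ)) = (q : ℤ) + 1 := by
          rw [cyclotomic_two]; simp
        rw [he1, he2, hΦval] at hid
        by_cases hpq : p = 3 ∧ q = 2
        · exact h ⟨hpq.2, by rw [← hdm, hpq.1, hm2'']⟩
        · have hkey := bv_key hp3 hq hpq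
          have hnat : q ^ p + 1 = p * (q + 1) := by exact_mod_cast hid
          have hA : q ^ p = q ^ p := rfl
          nlinarith
      · have hm3' : 3 ≤ m := by omega
        have hp5 : 5 ≤ p := by
          have hmle := Nat.le_of_dvd (by omega) hmp1
          have hp4 : 4 ≤ p := by omega
          rcases eq_or_ne p 4 with h4 | h4
          · exfalso; rw [h4] at hp; norm_num at hp
          · omega
        set X : ℕ := ((cyclotomic m ℤ).eval (q : ℤ)).natAbs with hX
        have hupper : X < (q + 1) ^ m.totient := bv_upper hm3' hq
        have hqp2 : 2 ^ p ≤ q ^ p := Nat.pow_le_pow_left hq p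
        have h2p2 : 2 ≤ 2 ^ p := Nat.le_self_pow (by omega) 2
        have hlow : (q ^ p - 1) ^ m.totient <
            ((cyclotomic m ℤ).eval ((q ^ p : ℕ) : ℤ)).natAbs :=
          sub_one_pow_totient_lt_natAbs_cyclotomic_eval (by omega) (by omega)
        have hcast2 : ((q ^ p : ℕ) : ℤ) = (q : ℤ) ^ p := by push_cast; ring
        rw [hcast2] at hlow
        have hnatid : ((cyclotomic m ℤ).eval ((q : ℤ) ^ p)).natAbs = p * X := by
          rw [hid, hΦval, Int.natAbs_mul, Int.natAbs_natCast, hX]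
        rw [hnatid] at hlow
        set t : ℕ := m.totient with htdef
        have ht1 : 1 ≤ t := Nat.totient_pos.mpr (by omega)
        have hA : q + 1 ≤ q ^ p - 1 := by
          have h1 : q * q ≤ q ^ p := by
            calc q * q = q ^ 2 := by ring
              _ ≤ q ^ p := Nat.pow_le_pow_right (by omega) (by omega)
          have h2 : 2 * q ≤ q * q := Nat.mul_le_mul_right q hq
          omega
        have hchain : (q + 1) ^ (t - 1) * (q ^ p - 1) ≤ (q ^ p - 1) ^ t := by
          calc (q + 1) ^ (t - 1) * (q ^ p - 1)
              ≤ (q ^ p - 1) ^ (t - 1) * (q ^ p - 1) :=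
                Nat.mul_le_mul_right _ (Nat.pow_le_pow_left hA _)
            _ = (q ^ p - 1) ^ t := by
                rw [← pow_succ]
                congr 1
                omega
        have h5 : (q + 1) ^ (t - 1) * (q ^ p - 1) < (q + 1) ^ (t - 1) * (p * (q + 1)) := by
          calc (q + 1) ^ (t - 1) * (q ^ p - 1) ≤ (q ^ p - 1) ^ t := hchain
            _ < p * X := hlow
            _ ≤ p * (q + 1) ^ t := Nat.mul_le_mul_left p hupper.le
            _ = (q + 1) ^ (t - 1) * (p * (q + 1)) := by
                have hts : (q + 1) ^ t = (q + 1) ^ (t - 1) * (q + 1) := by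
                  rw [← pow_succ, Nat.sub_add_cancel ht1]
                rw [hts]
                ring
        have hfin2 : q ^ p - 1 < p * (q + 1) := Nat.lt_of_mul_lt_mul_left h5
        have hkey := bv_key hp3 hq (by rintro ⟨h3, _⟩; omega)
        have hpos1 : 1 ≤ q ^ p := Nat.one_le_pow _ _ (by omega)
        set A : ℕ := q ^ p
        set B : ℕ := p * (q + 1)
        omega
end

section
/- Let Σ = {S, T} be a Lusztig symbol with S, T finite subsets of ℕ, and define φ(Σ) = {S_e ∪ T_o, T_e ∪ S_o} where subscripts e, o denote even and odd elements. Then φ is an involution on symbols that preserves the rank, and the defects of Σ and φ(Σ) have the same parity; moreover, if the defect of Σ is even, then defect(φ(Σ)) − defect(Σ) ≡ 0 or 2 (mod 4), determined by the parity of rank(Σ). -/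
/-- The even part of a finite set of naturals. -/
def symEven (S : Finset ℕ) : Finset ℕ := S.filter (fun x => x % 2 = 0)

/-- The odd part of a finite set of naturals. -/
def symOdd (S : Finset ℕ) : Finset ℕ := S.filter (fun x => x % 2 = 1)

/-- First member of the symbol `φ({S,T}) = {S_e ∪ T_o, T_e ∪ S_o}`. -/
def phiFst (S T : Finset ℕ) : Finset ℕ := symEven S ∪ symOdd T

/-- Second member of the symbol `φ({S,T}) = {S_e ∪ T_o, T_e ∪ S_o}`. -/
def phiSnd (S T : Finset ℕ) : Finset ℕ := symEven T ∪ symOdd S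

/-- The defect `||S| − |T||` of a symbol `{S,T}`. -/
def symDefect (S T : Finset ℕ) : ℤ := |(S.card : ℤ) - (T.card : ℤ)|

/-- The rank `Σ_{x∈S} x + Σ_{y∈T} y + ⌊((|S|+|T|−1)/2)²⌋` of a symbol `{S,T}`. -/
def symRank (S T : Finset ℕ) : ℕ :=
  ∑ x ∈ S, x + ∑ y ∈ T, y + ((S.card + T.card - 1) / 2) * ((S.card + T.card) / 2)

lemma even_union_odd (S : Finset ℕ) : symEven S ∪ symOdd S = S := by
  ext x; simp only [symEven, symOdd, Finset.mem_union, Finset.mem_filter]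
  constructor
  · rintro (⟨h,_⟩|⟨h,_⟩) <;> exact h
  · intro h; rcases Nat.even_or_odd x with he|ho
    · exact Or.inl ⟨h, Nat.even_iff.mp he⟩
    · exact Or.inr ⟨h, Nat.odd_iff.mp ho⟩

lemma disj_eo (S T : Finset ℕ) : Disjoint (symEven S) (symOdd T) := by
  rw [Finset.disjoint_left]
  simp only [symEven, symOdd, Finset.mem_filter]
  rintro a ⟨_, h0⟩ ⟨_, h1⟩; omega

lemma symEven_union (S T : Finset ℕ) : symEven (S ∪ T) = symEven S ∪ symEven T :=
  Finset.filter_union _ _ _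
lemma symOdd_union (S T : Finset ℕ) : symOdd (S ∪ T) = symOdd S ∪ symOdd T :=
  Finset.filter_union _ _ _
lemma symEven_symEven (S : Finset ℕ) : symEven (symEven S) = symEven S := by
  simp [symEven, Finset.filter_filter]
lemma symEven_symOdd (S : Finset ℕ) : symEven (symOdd S) = ∅ := by
  simp only [symEven, symOdd, Finset.filter_filter]
  apply Finset.filter_false_of_mem; intro x _; omega
lemma symOdd_symEven (S : Finset ℕ) : symOdd (symEven S) = ∅ := by
  simp only [symEven, symOdd, Finset.filter_filter]
  apply Finset.filter_false_of_mem; intro x _; omega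
lemma symOdd_symOdd (S : Finset ℕ) : symOdd (symOdd S) = symOdd S := by
  simp [symOdd, Finset.filter_filter]

lemma symEven_phiFst (S T : Finset ℕ) : symEven (phiFst S T) = symEven S := by
  rw [phiFst, symEven_union, symEven_symEven, symEven_symOdd, Finset.union_empty]
lemma symOdd_phiFst (S T : Finset ℕ) : symOdd (phiFst S T) = symOdd T := by
  rw [phiFst, symOdd_union, symOdd_symEven, symOdd_symOdd, Finset.empty_union]

lemma sum_mod_two (S : Finset ℕ) : (∑ x ∈ S, x) % 2 = (symOdd S).card % 2 := by
  rw [Finset.sum_nat_mod]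
  congr 1
  rw [symOdd, Finset.card_filter]
  exact Finset.sum_congr rfl (fun x _ => by split_ifs with h <;> omega)

lemma even_abs' (x : ℤ) : Even |x| ↔ Even x := by
  rcases abs_cases x with ⟨h, _⟩ | ⟨h, _⟩ <;> rw [h]
  exact even_neg

lemma abs_emod_four (x : ℤ) (h : Even x) : |x| % 4 = x % 4 := by
  obtain ⟨k, hk⟩ := h
  rcases abs_cases x with ⟨h1, _⟩ | ⟨h1, _⟩ <;> omega

/-- The involution `φ(Σ) = {S_e ∪ T_o, T_e ∪ S_o}` on Lusztig symbols is an involution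
preserving the rank; the defects of `Σ` and `φ(Σ)` have the same parity, and when the defect
is even, `defect(φ(Σ)) − defect(Σ)` is `0` or `2` mod `4` according to the parity of
`rank(Σ)`. -/
theorem phi_symbol_properties (S T : Finset ℕ) :
    (phiFst (phiFst S T) (phiSnd S T) = S ∧ phiSnd (phiFst S T) (phiSnd S T) = T) ∧
    symRank (phiFst S T) (phiSnd S T) = symRank S T ∧
    (Even (symDefect (phiFst S T) (phiSnd S T)) ↔ Even (symDefect S T)) ∧
    (Even (symDefect S T) →
      ((Even (symRank S T) →
          (symDefect (phiFst S T) (phiSnd S T) - symDefect S T) % 4 = 0) ∧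
        (¬ Even (symRank S T) →
          (symDefect (phiFst S T) (phiSnd S T) - symDefect S T) % 4 = 2))) := by
  have hPS : phiSnd S T = phiFst T S := rfl
  -- cards
  set a := (symEven S).card with ha
  set b := (symOdd S).card with hb
  set c := (symEven T).card with hc
  set d := (symOdd T).card with hd
  have hcS : S.card = a + b := by
    rw [← even_union_odd S, Finset.card_union_of_disjoint (disj_eo S S)]
  have hcT : T.card = c + d := by
    rw [← even_union_odd T, Finset.card_union_of_disjoint (disj_eo T T)]
  have hc1 : (phiFst S T).card = a + d :=
    Finset.card_union_of_disjoint (disj_eo S T)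
  have hc2 : (phiSnd S T).card = c + b :=
    Finset.card_union_of_disjoint (disj_eo T S)
  -- involution
  have hinv1 : phiFst (phiFst S T) (phiSnd S T) = S := by
    rw [phiFst, symEven_phiFst, hPS, symOdd_phiFst, even_union_odd]
  have hinv2 : phiSnd (phiFst S T) (phiSnd S T) = T := by
    rw [phiSnd, hPS, symEven_phiFst, symOdd_phiFst, even_union_odd]
  -- sums
  have hsS : ∑ x ∈ S, x = ∑ x ∈ symEven S, x + ∑ x ∈ symOdd S, x := by
    rw [← Finset.sum_union (disj_eo S S), even_union_odd]
  have hsT : ∑ x ∈ T, x = ∑ x ∈ symEven T, x + ∑ x ∈ symOdd T, x := by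
    rw [← Finset.sum_union (disj_eo T T), even_union_odd]
  have hs1 : ∑ x ∈ phiFst S T, x = ∑ x ∈ symEven S, x + ∑ x ∈ symOdd T, x :=
    Finset.sum_union (disj_eo S T)
  have hs2 : ∑ x ∈ phiSnd S T, x = ∑ x ∈ symEven T, x + ∑ x ∈ symOdd S, x :=
    Finset.sum_union (disj_eo T S)
  -- rank preservation
  have hrank : symRank (phiFst S T) (phiSnd S T) = symRank S T := by
    rw [symRank, symRank, hs1, hs2, hsS, hsT, hc1, hc2, hcS, hcT]
    have : a + d + (c + b) = a + b + (c + d) := by ring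
    rw [this]; ring
  refine ⟨⟨hinv1, hinv2⟩, hrank, ?_, ?_⟩
  -- defect parity
  · rw [symDefect, symDefect, even_abs', even_abs', hc1, hc2, hcS, hcT,
      Int.even_iff, Int.even_iff]
    push_cast
    omega
  -- mod 4
  · intro hdef
    have hdefX : ((a : ℤ) + b - (c + d)) % 2 = 0 := by
      rw [symDefect, even_abs', hcS, hcT, Int.even_iff] at hdef
      push_cast at hdef
      omega
    have hXe : Even ((a : ℤ) + d - (c + b)) := by rw [Int.even_iff]; omega
    have hYe : Even ((a : ℤ) + b - (c + d)) := by rw [Int.even_iff]; omega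
    have hD1 : symDefect (phiFst S T) (phiSnd S T) = |((a : ℤ) + d - (c + b))| := by
      rw [symDefect, hc1, hc2]; push_cast; ring_nf
    have hD2 : symDefect S T = |((a : ℤ) + b - (c + d))| := by
      rw [symDefect, hcS, hcT]; push_cast; ring_nf
    have h4 : (symDefect (phiFst S T) (phiSnd S T) - symDefect S T) % 4
        = (((a : ℤ) + d - (c + b)) - ((a : ℤ) + b - (c + d))) % 4 := by
      rw [hD1, hD2, Int.sub_emod, abs_emod_four _ hXe, abs_emod_four _ hYe, ← Int.sub_emod]
    -- rank parity
    have hsSm := sum_mod_two S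
    have hsTm := sum_mod_two T
    have hn : a + b + (c + d) % 2 = a + b + (c + d) % 2 := rfl
    have hneven : (a + b + c + d) % 2 = 0 := by omega
    have hP : ((S.card + T.card - 1) / 2) * ((S.card + T.card) / 2) % 2 = 0 := by
      rw [hcS, hcT]
      obtain ⟨m, hm⟩ : ∃ m, a + b + (c + d) = 2 * m := ⟨(a+b+c+d)/2, by omega⟩
      rcases m with _ | k
      · have h0 : a + b + (c + d) = 0 := by omega
        rw [h0]
      · have h1 : (a + b + (c + d) - 1) / 2 = k := by omega
        have h2 : (a + b + (c + d)) / 2 = k + 1 := by omega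
        rw [h1, h2]; exact Nat.even_iff.mp (Nat.even_mul_succ_self k)
    have hrmod : symRank S T % 2 = (b + d) % 2 := by
      rw [symRank, Nat.add_mod, Nat.add_mod (∑ x ∈ S, x), hsSm, hsTm, hP]
      omega
    rw [Nat.even_iff, hrmod, h4]
    constructor <;> intro hbd <;> omega
end

section
/- Let M be a finitely generated abelian group with an action of a group Γ, and let N ⊆ M be a finite Γ-stable subgroup with quotient Q = M/N. Then the exact sequence N → M → Q → 0 of Γ-coinvariants N_Γ → M_Γ → Q_Γ → 0 remains exact upon passing to p-torsion subgroups: the sequence (N_Γ)_{p-tors} → (M_Γ)_{p-tors} → (Q_Γ)_{p-tors} → 0 is exact. -/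
/-- The augmentation subgroup: the quotient of `M` by it is the group `M_Γ` of
`Γ`-coinvariants. -/
def coinvAug (Γ : Type*) [Group Γ] (M : Type*) [AddCommGroup M] [DistribMulAction Γ M] :
    AddSubgroup M :=
  AddSubgroup.closure {x | ∃ (γ : Γ) (m : M), x = γ • m - m}

lemma coinvAug_le_map (Γ : Type*) [Group Γ] {M Q : Type*} [AddCommGroup M] [AddCommGroup Q]
    [DistribMulAction Γ M] [DistribMulAction Γ Q] (g : M →+ Q)
    (hgΓ : ∀ (γ : Γ) (x : M), g (γ • x) = γ • g x) (hgsurj : Function.Surjective g) :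
    coinvAug Γ Q ≤ (coinvAug Γ M).map g := by
  rw [coinvAug]
  apply AddSubgroup.closure_le _ |>.2
  rintro x ⟨γ, q, rfl⟩
  obtain ⟨m, rfl⟩ := hgsurj q
  exact ⟨γ • m - m, AddSubgroup.subset_closure ⟨γ, m, rfl⟩, by simp [hgΓ]⟩

/-- Let `Γ` act on a short exact sequence `0 → N → M → Q → 0` of abelian groups with `N`
finite. Then the right-exact sequence of coinvariants `N_Γ → M_Γ → Q_Γ → 0` remains exact
after passing to `p`-torsion subgroups: `(N_Γ)_{p-tors} → (M_Γ)_{p-tors} → (Q_Γ)_{p-tors} → 0`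
is exact.  (An element of a coinvariants group is represented by an element of the group,
its class is `p`-torsion iff some `p`-power multiple lies in the augmentation subgroup, and
it vanishes iff the representative lies in the augmentation subgroup.) -/
theorem coinvariants_pTorsion_exact (p : ℕ) (hp : p.Prime) (Γ : Type*) [Group Γ]
    (N M Q : Type*) [AddCommGroup N] [AddCommGroup M] [AddCommGroup Q]
    [DistribMulAction Γ N] [DistribMulAction Γ M] [DistribMulAction Γ Q] [Finite N]
    (f : N →+ M) (g : M →+ Q)
    (hfΓ : ∀ (γ : Γ) (x : N), f (γ • x) = γ • f x)
    (hgΓ : ∀ (γ : Γ) (x : M), g (γ • x) = γ • g x)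
    (hfinj : Function.Injective f) (hgsurj : Function.Surjective g)
    (hexact : f.range = g.ker) :
    -- surjectivity on p-torsion of coinvariants
    (∀ q : Q, (∃ n : ℕ, p ^ n • q ∈ coinvAug Γ Q) →
      ∃ m : M, (∃ n : ℕ, p ^ n • m ∈ coinvAug Γ M) ∧ g m - q ∈ coinvAug Γ Q) ∧
    -- exactness in the middle on p-torsion of coinvariants
    (∀ m : M, (∃ n : ℕ, p ^ n • m ∈ coinvAug Γ M) → g m ∈ coinvAug Γ Q →
      ∃ x : N, (∃ n : ℕ, p ^ n • x ∈ coinvAug Γ N) ∧ m - f x ∈ coinvAug Γ M) := by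
  set c := Nat.card N with hc
  have hc0 : c ≠ 0 := Nat.card_pos.ne'
  set a := c.factorization p with ha
  set b := c / p ^ a with hb
  have hab : p ^ a * b = c := Nat.ordProj_mul_ordCompl_eq_self c p
  have hcop : Nat.Coprime p b := Nat.coprime_ordCompl hp hc0
  have hcast : ((p : ℤ)) ^ a * (b : ℤ) = (c : ℤ) := by exact_mod_cast hab
  have hNc : ∀ x : N, (c : ℤ) • x = 0 := by
    intro x
    rw [natCast_zsmul, hc, card_nsmul_eq_zero']
  have hbez : ∀ k : ℕ, ∃ s t : ℤ, s * (p : ℤ) ^ k + t * (b : ℤ) = 1 := by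
    intro k
    have : IsCoprime ((p : ℤ) ^ k) (b : ℤ) := by
      rw [Int.isCoprime_iff_gcd_eq_one, ← Nat.cast_pow, Int.gcd_natCast_natCast]
      exact hcop.pow_left _
    obtain ⟨s, t, h⟩ := this
    exact ⟨s, t, h⟩
  constructor
  · intro q ⟨n, hq⟩
    obtain ⟨a0, ha0, ha0g⟩ := coinvAug_le_map Γ g hgΓ hgsurj hq
    obtain ⟨m0, hm0⟩ := hgsurj q
    obtain ⟨x, hx⟩ : ∃ x, f x = p ^ n • m0 - a0 := by
      have : p ^ n • m0 - a0 ∈ g.ker := by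
        simp [AddMonoidHom.mem_ker, map_nsmul, hm0, ha0g]
      rwa [← hexact] at this
    obtain ⟨s, t, hst⟩ := hbez (n + a)
    refine ⟨m0 - f ((s * (p : ℤ) ^ a) • x), ⟨n + a, ?_⟩, ?_⟩
    · have hx' : f x = (p : ℤ) ^ n • m0 - a0 := by
        rw [hx, ← natCast_zsmul m0 (p ^ n), Nat.cast_pow]
      have h1 : (c : ℤ) • f x = 0 := by rw [← map_zsmul, hNc, map_zero]
      have key : p ^ (n + a) • (m0 - f ((s * (p : ℤ) ^ a) • x)) = p ^ a • a0 := by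
        rw [← natCast_zsmul (m0 - f ((s * (p : ℤ) ^ a) • x)) (p ^ (n + a)),
          ← natCast_zsmul a0 (p ^ a), Nat.cast_pow, Nat.cast_pow, map_zsmul,
          smul_sub, smul_smul]
        have hs : (p : ℤ) ^ (n + a) * (s * (p : ℤ) ^ a) = (p : ℤ) ^ a - t * (c : ℤ) := by
          rw [← hcast]; linear_combination ((p : ℤ) ^ a) * hst
        rw [hs, sub_smul, mul_smul, h1, smul_zero, sub_zero, hx']
        module
      rw [key]
      exact AddSubgroup.nsmul_mem _ ha0 _
    · have hk : f ((s * (p : ℤ) ^ a) • x) ∈ g.ker := hexact ▸ ⟨_, rfl⟩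
      rw [map_sub, AddMonoidHom.mem_ker.mp hk, hm0, sub_zero, sub_self]
      exact zero_mem _
  · intro m ⟨n, hm⟩ hgm
    obtain ⟨a0, ha0, ha0g⟩ := coinvAug_le_map Γ g hgΓ hgsurj hgm
    obtain ⟨x0, hx0⟩ : ∃ x0, f x0 = m - a0 := by
      have : m - a0 ∈ g.ker := by simp [AddMonoidHom.mem_ker, map_sub, ha0g]
      rwa [← hexact] at this
    obtain ⟨s, t, hst⟩ := hbez (a + n)
    refine ⟨(t * (b : ℤ)) • x0, ⟨a, ?_⟩, ?_⟩
    · have h2 : p ^ a • ((t * (b : ℤ)) • x0) = 0 := by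
        rw [← natCast_zsmul ((t * (b : ℤ)) • x0) (p ^ a), Nat.cast_pow, smul_smul]
        have hs2 : (p : ℤ) ^ a * (t * (b : ℤ)) = t * (c : ℤ) := by rw [← hcast]; ring
        rw [hs2, mul_smul, hNc, smul_zero]
      rw [h2]
      exact zero_mem _
    · have key : m - f ((t * (b : ℤ)) • x0) =
          (s * (p : ℤ) ^ a) • (p ^ n • m) + (t * (b : ℤ)) • a0 := by
        rw [map_zsmul, hx0, ← natCast_zsmul m (p ^ n), Nat.cast_pow]
        have h4 : (s * (p : ℤ) ^ (a + n) + t * (b : ℤ)) • m = (1 : ℤ) • m := by rw [hst]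
        linear_combination (norm := module) -h4
      rw [key]
      exact AddSubgroup.add_mem _ (AddSubgroup.zsmul_mem _ hm _) (AddSubgroup.zsmul_mem _ ha0 _)
end
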